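/- Let p be an odd prime and let i, k be integers with 2 ≤ i ≤ k. Then i + v_p(C(k,i)) > 1 + v_p(k), where C(k,i) is the binomial coefficient and v_p denotes the p-adic valuation. (Consequently, for p odd, ((1+p)^k − 1)/p = ∑_{i=1}^{k} C(k,i)·p^{i−1} agrees with k up to a p-adic unit.) -/

import Mathlib

lemma aux_pow (v : ℕ) (hv : 1 ≤ v) : v + 2 ≤ 3 ^ v := by
  induction v with
  | zero => omega
  | succ n ih =>
    rcases Nat.eq_or_lt_of_le hv with h | h
    · simp [← h]
    · have := ih (by omega)
      have : 3 ^ n + 1 ≤ 3 ^ (n + 1) := by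
        have : 1 ≤ 3 ^ n := Nat.one_le_pow _ _ (by norm_num)
        calc 3 ^ n + 1 ≤ 3 ^ n + 3 ^ n + 3 ^ n := by omega
        _ = 3 ^ (n+1) := by ring
      omega

/-- Let `p` be an odd prime and `i, k` integers with `2 ≤ i ≤ k`.  Then
`i + v_p(C(k,i)) > 1 + v_p(k)`, where `C(k,i)` is the binomial coefficient and `v_p`
the `p`-adic valuation. -/
theorem stmt11 (p : ℕ) (hp : p.Prime) (hodd : p ≠ 2) (i k : ℕ) (hi : 2 ≤ i) (hik : i ≤ k) :
    1 + padicValNat p k < i + padicValNat p (k.choose i) := by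
  have hk1 : 1 ≤ k := by omega
  have hi1 : 1 ≤ i := by omega
  haveI : Fact p.Prime := ⟨hp⟩
  have hp3 : 3 ≤ p := by
    have := hp.two_le
    omega
  -- identity k * C(k-1, i-1) = C(k, i) * i
  have hid : k * (k - 1).choose (i - 1) = k.choose i * i := by
    have := Nat.add_one_mul_choose_eq (k - 1) (i - 1)
    have h1 : k - 1 + 1 = k := by omega
    have h2 : i - 1 + 1 = i := by omega
    rw [h1, h2] at this
    exact this
  have hcne : (k - 1).choose (i - 1) ≠ 0 :=
    (Nat.choose_pos (by omega)).ne'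
  have hCne : k.choose i ≠ 0 := (Nat.choose_pos hik).ne'
  have hval : padicValNat p k + padicValNat p ((k - 1).choose (i - 1)) =
      padicValNat p (k.choose i) + padicValNat p i := by
    rw [← padicValNat.mul (by omega) hcne, ← padicValNat.mul hCne (by omega), hid]
  have h1 : padicValNat p k ≤ padicValNat p (k.choose i) + padicValNat p i := by omega
  -- v_p(i) + 1 < i
  have h2 : padicValNat p i + 1 < i := by
    set v := padicValNat p i with hv
    by_cases hv0 : v = 0
    · omega
    · have hdvd : p ^ v ∣ i := pow_padicValNat_dvd
      have hle : p ^ v ≤ i := Nat.le_of_dvd (by omega) hdvd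
      have h3 : 3 ^ v ≤ p ^ v := Nat.pow_le_pow_left hp3 v
      have := aux_pow v (by omega)
      omega
  omega
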